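/- Let θ > 0 and a ∈ ℝ, set τ = 2·cosh(2θ), Δ = 2 − τ, μ = a/Δ, and let ĉ > 0. Define x₁, x₂ : ℝ → ℝ² by x₁(β) = √ĉ·( μ/√ĉ + cosh β / cosh θ, μ/√ĉ + cosh(β − 2θ)/cosh θ ) and x₂(β) = √ĉ·( μ/√ĉ − cosh β / cosh θ, μ/√ĉ − cosh(β − 2θ)/cosh θ ). Let ĉ₁ = Δ·(ĉ − μ²) and define p : ℝ² → ℝ by p(r,s) = −4a(r+s) + (2−τ)(r+s)² + (2+τ)(r−s)² − 4ĉ₁. Then the constraint curve Γ = { (r,s) ∈ ℝ² : p(r,s) = 0 } equals the union of the ranges of x₁ and x₂: Γ = { x₁(β) : β ∈ ℝ } ∪ { x₂(β) : β ∈ ℝ }. -/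

import Mathlib

set_option maxHeartbeats 1000000

open Real

/-- for `det A = 1` and `tr A = τ = 2 cosh 2θ > 2`, the constraint curve
`Γ = p⁻¹(0)` equals the union of the two hyperbolically parametrized branches `x₁, x₂`. -/
theorem stmt_13 (θ a : ℝ) (hθ : 0 < θ)
    (τ Δ μ c : ℝ) (hτ : τ = 2 * Real.cosh (2 * θ)) (hΔ : Δ = 2 - τ) (hμ : μ = a / Δ)
    (hc : 0 < c)
    (x₁ x₂ : ℝ → ℝ × ℝ)
    (hx₁ : x₁ = fun β => (Real.sqrt c * (μ / Real.sqrt c + Real.cosh β / Real.cosh θ),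
      Real.sqrt c * (μ / Real.sqrt c + Real.cosh (β - 2 * θ) / Real.cosh θ)))
    (hx₂ : x₂ = fun β => (Real.sqrt c * (μ / Real.sqrt c - Real.cosh β / Real.cosh θ),
      Real.sqrt c * (μ / Real.sqrt c - Real.cosh (β - 2 * θ) / Real.cosh θ)))
    (c₁ : ℝ) (hc₁ : c₁ = Δ * (c - μ ^ 2))
    (p : ℝ × ℝ → ℝ)
    (hp : p = fun z => -4 * a * (z.1 + z.2) + (2 - τ) * (z.1 + z.2) ^ 2
      + (2 + τ) * (z.1 - z.2) ^ 2 - 4 * c₁) :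
    {z : ℝ × ℝ | p z = 0} = {z | ∃ β : ℝ, z = x₁ β} ∪ {z | ∃ β : ℝ, z = x₂ β} := by
  have hct : 0 < Real.cosh θ := Real.cosh_pos θ
  have hst : 0 < Real.sinh θ := Real.sinh_pos_iff.mpr hθ
  have hsc : 0 < Real.sqrt c := Real.sqrt_pos.mpr hc
  have hsc2 : Real.sqrt c ^ 2 = c := Real.sq_sqrt hc.le
  have hcs : Real.cosh θ ^ 2 = Real.sinh θ ^ 2 + 1 := Real.cosh_sq θ
  have hch2 : Real.cosh (2 * θ) = Real.cosh θ ^ 2 + Real.sinh θ ^ 2 := by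
    rw [two_mul, Real.cosh_add]; ring
  have hsh2 : Real.sinh (2 * θ) = 2 * Real.sinh θ * Real.cosh θ := by
    rw [two_mul, Real.sinh_add]; ring
  have hΔval : Δ = -4 * Real.sinh θ ^ 2 := by rw [hΔ, hτ, hch2]; linarith
  have hΔne : Δ ≠ 0 := by rw [hΔval]; nlinarith
  have ha : a = μ * Δ := by rw [hμ]; field_simp
  have hτp : 2 + τ = 4 * Real.cosh θ ^ 2 := by rw [hτ, hch2]; linarith
  have hpform : ∀ r s : ℝ, -4 * a * (r + s) + (2 - τ) * (r + s) ^ 2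
      + (2 + τ) * (r - s) ^ 2 - 4 * c₁
      = Δ * ((r + s - 2 * μ) ^ 2 - 4 * c) + (2 + τ) * (r - s) ^ 2 := by
    intro r s
    linear_combination (-(r + s) ^ 2) * hΔ - 4 * (r + s) * ha - 4 * hc₁
  ext z
  obtain ⟨r, s⟩ := z
  simp only [Set.mem_setOf_eq, Set.mem_union, hp, hx₁, hx₂]
  constructor
  · intro h
    rw [hpform] at h
    have key : Real.sinh θ ^ 2 * ((r + s - 2 * μ) ^ 2 - 4 * c)
        = Real.cosh θ ^ 2 * (r - s) ^ 2 := by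
      linear_combination (-1/4) * h + (((r + s - 2 * μ) ^ 2 - 4 * c) / 4) * hΔval
        + ((r - s) ^ 2 / 4) * hτp
    obtain ⟨V, hVdef⟩ : ∃ V : ℝ, V = (r - s) * Real.cosh θ / (2 * Real.sqrt c * Real.sinh θ) :=
      ⟨_, rfl⟩
    have hVsq : 4 * c * Real.sinh θ ^ 2 * V ^ 2 = (r - s) ^ 2 * Real.cosh θ ^ 2 := by
      rw [hVdef]
      field_simp
      linear_combination (-(4 * (r - s) ^ 2)) * hsc2
    have hU2 : (r + s - 2 * μ) ^ 2 = 4 * c * (1 + V ^ 2) := by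
      have hm : Real.sinh θ ^ 2 * ((r + s - 2 * μ) ^ 2)
          = Real.sinh θ ^ 2 * (4 * c * (1 + V ^ 2)) := by
        linear_combination key - hVsq
      exact mul_left_cancel₀ (pow_ne_zero 2 hst.ne') hm
    rcases le_or_gt 0 (r + s - 2 * μ) with hU | hU
    · left
      obtain ⟨φ, hφdef⟩ : ∃ φ : ℝ, φ = Real.arsinh V := ⟨_, rfl⟩
      have hsφ : Real.sinh φ = V := by rw [hφdef]; exact Real.sinh_arsinh V
      have hc2 : Real.cosh φ ^ 2 = V ^ 2 + 1 := by rw [Real.cosh_sq, hsφ]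
      have hcφ : 2 * Real.sqrt c * Real.cosh φ = r + s - 2 * μ := by
        have h1 : (2 * Real.sqrt c * Real.cosh φ) ^ 2 = (r + s - 2 * μ) ^ 2 := by
          linear_combination 4 * Real.cosh φ ^ 2 * hsc2 + 4 * c * hc2 - hU2
        have h2 : 0 ≤ 2 * Real.sqrt c * Real.cosh φ := by positivity
        calc 2 * Real.sqrt c * Real.cosh φ
            = Real.sqrt ((2 * Real.sqrt c * Real.cosh φ) ^ 2) := (Real.sqrt_sq h2).symm
          _ = Real.sqrt ((r + s - 2 * μ) ^ 2) := by rw [h1]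
          _ = r + s - 2 * μ := Real.sqrt_sq hU
      have hcφ' : Real.cosh φ = (r + s - 2 * μ) / (2 * Real.sqrt c) := by
        rw [eq_div_iff (by positivity)]
        linarith [hcφ]
      refine ⟨φ + θ, ?_⟩
      have hca : Real.cosh (φ + θ) = Real.cosh φ * Real.cosh θ + V * Real.sinh θ := by
        rw [Real.cosh_add, hsφ]
      have hcb : Real.cosh (φ + θ - 2 * θ) = Real.cosh φ * Real.cosh θ - V * Real.sinh θ := by
        rw [show φ + θ - 2 * θ = φ - θ by ring, Real.cosh_sub, hsφ]
      simp only [Prod.mk.injEq]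
      rw [hca, hcb, hcφ', hVdef]
      constructor
      · field_simp
        ring
      · field_simp
        ring
    · right
      obtain ⟨φ, hφdef⟩ : ∃ φ : ℝ, φ = Real.arsinh (-V) := ⟨_, rfl⟩
      have hsφ : Real.sinh φ = -V := by rw [hφdef]; exact Real.sinh_arsinh (-V)
      have hc2 : Real.cosh φ ^ 2 = V ^ 2 + 1 := by rw [Real.cosh_sq, hsφ]; ring
      have hcφ : 2 * Real.sqrt c * Real.cosh φ = -(r + s - 2 * μ) := by
        have h1 : (2 * Real.sqrt c * Real.cosh φ) ^ 2 = (-(r + s - 2 * μ)) ^ 2 := by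
          linear_combination 4 * Real.cosh φ ^ 2 * hsc2 + 4 * c * hc2 - hU2
        have h2 : 0 ≤ 2 * Real.sqrt c * Real.cosh φ := by positivity
        calc 2 * Real.sqrt c * Real.cosh φ
            = Real.sqrt ((2 * Real.sqrt c * Real.cosh φ) ^ 2) := (Real.sqrt_sq h2).symm
          _ = Real.sqrt ((-(r + s - 2 * μ)) ^ 2) := by rw [h1]
          _ = -(r + s - 2 * μ) := Real.sqrt_sq (by linarith)
      have hcφ' : Real.cosh φ = -(r + s - 2 * μ) / (2 * Real.sqrt c) := by
        rw [eq_div_iff (by positivity)]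
        linarith [hcφ]
      refine ⟨φ + θ, ?_⟩
      have hca : Real.cosh (φ + θ) = Real.cosh φ * Real.cosh θ + (-V) * Real.sinh θ := by
        rw [Real.cosh_add, hsφ]
      have hcb : Real.cosh (φ + θ - 2 * θ) = Real.cosh φ * Real.cosh θ - (-V) * Real.sinh θ := by
        rw [show φ + θ - 2 * θ = φ - θ by ring, Real.cosh_sub, hsφ]
      simp only [Prod.mk.injEq]
      rw [hca, hcb, hcφ', hVdef]
      constructor
      · field_simp
        ring
      · field_simp
        ring
  · have hsum : ∀ β : ℝ, Real.cosh β + Real.cosh (β - 2 * θ)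
        = 2 * Real.cosh (β - θ) * Real.cosh θ := by
      intro β
      rw [Real.cosh_sub β (2 * θ), hch2, hsh2, Real.cosh_sub β θ]
      linear_combination (-(Real.cosh β)) * hcs
    have hdiff : ∀ β : ℝ, Real.cosh β - Real.cosh (β - 2 * θ)
        = 2 * Real.sinh (β - θ) * Real.sinh θ := by
      intro β
      rw [Real.cosh_sub β (2 * θ), hch2, hsh2, Real.sinh_sub β θ]
      linear_combination (-(Real.cosh β)) * hcs
    rintro (⟨β, hβ⟩ | ⟨β, hβ⟩) <;> rw [Prod.mk.injEq] at hβ <;>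
        obtain ⟨h1, h2⟩ := hβ <;> subst h1 <;> subst h2 <;> rw [hpform, hΔval, hτp]
    · have hA : Real.sqrt c * (μ / Real.sqrt c + Real.cosh β / Real.cosh θ)
          + Real.sqrt c * (μ / Real.sqrt c + Real.cosh (β - 2 * θ) / Real.cosh θ)
          = 2 * μ + 2 * Real.sqrt c * Real.cosh (β - θ) := by
        field_simp
        linear_combination (Real.sqrt c) * hsum β
      have hB : Real.sqrt c * (μ / Real.sqrt c + Real.cosh β / Real.cosh θ)
          - Real.sqrt c * (μ / Real.sqrt c + Real.cosh (β - 2 * θ) / Real.cosh θ)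
          = 2 * Real.sqrt c * Real.sinh (β - θ) * Real.sinh θ / Real.cosh θ := by
        field_simp
        linear_combination (Real.sqrt c) * hdiff β
      rw [hA, hB]
      have hcb : Real.cosh (β - θ) ^ 2 = Real.sinh (β - θ) ^ 2 + 1 := Real.cosh_sq _
      field_simp
      linear_combination (-(16 * Real.sinh θ ^ 2 * Real.sqrt c ^ 2)) * hcb
        + (-(16 * Real.sinh θ ^ 2)) * hsc2
    · have hA : Real.sqrt c * (μ / Real.sqrt c - Real.cosh β / Real.cosh θ)
          + Real.sqrt c * (μ / Real.sqrt c - Real.cosh (β - 2 * θ) / Real.cosh θ)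
          = 2 * μ - 2 * Real.sqrt c * Real.cosh (β - θ) := by
        field_simp
        linear_combination (-(Real.sqrt c)) * hsum β
      have hB : Real.sqrt c * (μ / Real.sqrt c - Real.cosh β / Real.cosh θ)
          - Real.sqrt c * (μ / Real.sqrt c - Real.cosh (β - 2 * θ) / Real.cosh θ)
          = -(2 * Real.sqrt c * Real.sinh (β - θ) * Real.sinh θ / Real.cosh θ) := by
        field_simp
        linear_combination (-(Real.sqrt c)) * hdiff β
      rw [hA, hB]
      have hcb : Real.cosh (β - θ) ^ 2 = Real.sinh (β - θ) ^ 2 + 1 := Real.cosh_sq _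
      field_simp
      linear_combination (-(16 * Real.sinh θ ^ 2 * Real.sqrt c ^ 2)) * hcb
        + (-(16 * Real.sinh θ ^ 2)) * hsc2
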